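/- For block sizes (2,1,3,2) (so n = 8), the five polynomials M_{(2,3)} = x_{2,3}, M_{(3,4)} = x_{3,4}, M_{(6,7)} = x_{6,7}, M_{(5,8)} = det[[x_{5,7},x_{5,8}],[x_{6,7},x_{6,8}]], and M_{(1,5)} = det[[x_{1,3},x_{1,4},x_{1,5}],[x_{2,3},x_{2,4},x_{2,5}],[0,x_{3,4},x_{3,5}]] are each invariant under the conjugation action of the group N of upper unitriangular 8×8 matrices on the nilradical matrix X, and they are algebraically independent over K. -/
import Mathlib


open Matrix

/-- Block map for the block sizes `(2,1,3,2)` of `gl(8)`: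
blocks `{1,2}, {3}, {4,5,6}, {7,8}`. -/
def blk8 (i : Fin 8) : ℕ :=
  if (i : ℕ) < 2 then 0 else if (i : ℕ) < 3 then 1 else if (i : ℕ) < 6 then 2 else 3

/-- `M_{(2,3)} = x_{2,3}`. -/
def M23 {K : Type*} [Field K] (X : Matrix (Fin 8) (Fin 8) K) : K := X 1 2

/-- `M_{(3,4)} = x_{3,4}`. -/
def M34 {K : Type*} [Field K] (X : Matrix (Fin 8) (Fin 8) K) : K := X 2 3

/-- `M_{(6,7)} = x_{6,7}`. -/
def M67 {K : Type*} [Field K] (X : Matrix (Fin 8) (Fin 8) K) : K := X 5 6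

/-- `M_{(5,8)} = det [[x_{5,7}, x_{5,8}], [x_{6,7}, x_{6,8}]]`. -/
def M58 {K : Type*} [Field K] (X : Matrix (Fin 8) (Fin 8) K) : K :=
  X 4 6 * X 5 7 - X 4 7 * X 5 6

/-- `M_{(1,5)} = det [[x_{1,3}, x_{1,4}, x_{1,5}], [x_{2,3}, x_{2,4}, x_{2,5}],
[0, x_{3,4}, x_{3,5}]]`. -/
def M15 {K : Type*} [Field K] (X : Matrix (Fin 8) (Fin 8) K) : K :=
  (Matrix.of ![![X 0 2, X 0 3, X 0 4], ![X 1 2, X 1 3, X 1 4], ![0, X 2 3, X 2 4]]).det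

/-- A witness family of nilradical matrices realizing arbitrary values of the five minors. -/
def phi8 {K : Type*} [Field K] (x : Fin 5 → K) : Matrix (Fin 8) (Fin 8) K :=
  Matrix.of fun i j =>
    if i = 0 ∧ j = 2 then x 4 else if i = 1 ∧ j = 2 then x 0 else
    if i = 1 ∧ j = 3 then 1 else if i = 2 ∧ j = 3 then x 1 else
    if i = 2 ∧ j = 4 then 1 else if i = 4 ∧ j = 6 then x 3 else
    if i = 5 ∧ j = 6 then x 2 else if i = 5 ∧ j = 7 then 1 else 0

/-- The inverse of a unitriangular matrix is unitriangular (with the two unit equations). -/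
theorem unitriangular_inv_aux {K : Type*} [Field K] (g : Matrix (Fin 8) (Fin 8) K)
    (hg : ∀ a b : Fin 8, b < a → g a b = 0) (hgd : ∀ a : Fin 8, g a a = 1) :
    g * g⁻¹ = 1 ∧ g⁻¹ * g = 1 ∧ (∀ a b : Fin 8, b < a → g⁻¹ a b = 0) ∧
      ∀ a : Fin 8, g⁻¹ a a = 1 := by
  have hbt : g.BlockTriangular id := fun i j h => hg i j h
  have hdet : g.det = 1 := by
    rw [Matrix.det_of_upperTriangular hbt]
    simp [hgd]
  have hu : IsUnit g.det := by rw [hdet]; exact isUnit_one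
  have h1 : g * g⁻¹ = 1 := Matrix.mul_nonsing_inv g hu
  have h2 : g⁻¹ * g = 1 := Matrix.nonsing_inv_mul g hu
  haveI : Invertible g := g.invertibleOfIsUnitDet hu
  have htri : ∀ a b : Fin 8, b < a → g⁻¹ a b = 0 := fun a b h =>
    Matrix.blockTriangular_inv_of_blockTriangular hbt h
  refine ⟨h1, h2, htri, fun a => ?_⟩
  have := congrFun (congrFun h2 a) a
  rw [Matrix.mul_apply] at this
  rw [Finset.sum_eq_single a] at this
  · rw [hgd] at this; simpa using this
  · intro i _ hi
    rcases lt_or_gt_of_ne hi with h | h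
    · rw [htri a i h, zero_mul]
    · rw [hg i a h, mul_zero]
  · simp

/-- For block sizes `(2,1,3,2)`, the five minors `M_{(2,3)}, M_{(3,4)}, M_{(6,7)},
M_{(5,8)}, M_{(1,5)}` are invariant under conjugation of the nilradical matrix by every
upper unitriangular matrix, and they are algebraically independent over `K`. -/
theorem five_minors_N_invariant_and_independent {K : Type*} [Field K] [CharZero K] :
    (∀ (X g : Matrix (Fin 8) (Fin 8) K),
      (∀ a b : Fin 8, ¬ blk8 a < blk8 b → X a b = 0) →
      (∀ a b : Fin 8, b < a → g a b = 0) → (∀ a : Fin 8, g a a = 1) →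
      M23 (g * X * g⁻¹) = M23 X ∧ M34 (g * X * g⁻¹) = M34 X ∧
      M67 (g * X * g⁻¹) = M67 X ∧ M58 (g * X * g⁻¹) = M58 X ∧
      M15 (g * X * g⁻¹) = M15 X) ∧
    AlgebraicIndependent K
      (![M23, M34, M67, M58, M15] : Fin 5 → (Matrix (Fin 8) (Fin 8) K → K)) := by
  constructor
  · intro X g hX hg hgd
    obtain ⟨-, -, htri, hdiag⟩ := unitriangular_inv_aux g hg hgd
    refine ⟨?_, ?_, ?_, ?_, ?_⟩
    · show (g * X * g⁻¹) 1 2 = X 1 2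
      simp (config := {decide := true}) only [Matrix.mul_apply, Fin.sum_univ_eight, hX, hg,
        htri, hgd, hdiag]
      ring
    · show (g * X * g⁻¹) 2 3 = X 2 3
      simp (config := {decide := true}) only [Matrix.mul_apply, Fin.sum_univ_eight, hX, hg,
        htri, hgd, hdiag]
      ring
    · show (g * X * g⁻¹) 5 6 = X 5 6
      simp (config := {decide := true}) only [Matrix.mul_apply, Fin.sum_univ_eight, hX, hg,
        htri, hgd, hdiag]
      ring
    · show (g * X * g⁻¹) 4 6 * (g * X * g⁻¹) 5 7 - (g * X * g⁻¹) 4 7 * (g * X * g⁻¹) 5 6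
        = X 4 6 * X 5 7 - X 4 7 * X 5 6
      simp (config := {decide := true}) only [Matrix.mul_apply, Fin.sum_univ_eight, hX, hg,
        htri, hgd, hdiag]
      ring
    · rw [M15, M15, Matrix.det_fin_three, Matrix.det_fin_three]
      simp (config := {decide := true}) only [Matrix.mul_apply, Fin.sum_univ_eight, hX, hg,
        htri, hgd, hdiag, Matrix.of_apply, Matrix.cons_val', Matrix.cons_val_zero,
        Matrix.cons_val_one, Matrix.head_cons, Matrix.head_fin_const, Matrix.cons_val_fin_one,
        Matrix.empty_val', Matrix.cons_val_two, Matrix.tail_cons]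
      ring
  · rw [algebraicIndependent_iff]
    intro p hp
    apply MvPolynomial.funext (q := 0)
    intro x
    rw [map_zero]
    have h2 : (Pi.evalAlgHom K (fun _ : Matrix (Fin 8) (Fin 8) K => K) (phi8 x)).comp
        (MvPolynomial.aeval ![M23, M34, M67, M58, M15]) p = 0 := by
      simp [hp]
    rw [MvPolynomial.comp_aeval] at h2
    have h3 : (fun i => Pi.evalAlgHom K (fun _ : Matrix (Fin 8) (Fin 8) K => K) (phi8 x)
        (![M23, M34, M67, M58, M15] i)) = x := by
      funext i
      fin_cases i <;>
        simp (config := {decide := true}) [M23, M34, M67, M58, M15, phi8, Matrix.det_fin_three]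
    rw [h3] at h2
    rwa [← MvPolynomial.coe_aeval_eq_eval]
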